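/- 𝔠𝔬(1,2) is a Lie subalgebra of the 3×3 real matrices under the commutator bracket, and every 2-dimensional abelian Lie subalgebra of 𝔠𝔬(1,2) contains the identity matrix I (equivalently, contains the line ℝ·I of scalar matrices, which is the center of 𝔠𝔬(1,2)). -/

import Mathlib

open Matrix

attribute [local instance 100] LieRing.ofAssociativeRing

noncomputable section

/-- The matrix of the Lorentzian form `q(x) = 2x₁x₃ + x₂²` on `ℝ³`. -/
def Jmat : Matrix (Fin 3) (Fin 3) ℝ := !![0, 0, 1; 0, 1, 0; 1, 0, 0]

/-- The conformal Lie algebra `𝔠𝔬(1,2)`: matrices `A` with `Aᵀ·J + J·A = α·J`. -/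
def co12 : Set (Matrix (Fin 3) (Fin 3) ℝ) :=
  {A | ∃ α : ℝ, Aᵀ * Jmat + Jmat * A = α • Jmat}

lemma key_e1 {A B : Matrix (Fin 3) (Fin 3) ℝ} {α β : ℝ}
    (hA' : Aᵀ * Jmat = α • Jmat - Jmat * A) (hB' : Bᵀ * Jmat = β • Jmat - Jmat * B) :
    Bᵀ * (Aᵀ * Jmat) = (α*β) • Jmat - α • (Jmat * B) - β • (Jmat * A) + Jmat * (B * A) := by
  rw [hA', mul_sub, mul_smul_comm, hB',
    show Bᵀ * (Jmat * A) = (Bᵀ * Jmat) * A from (mul_assoc _ _ _).symm, hB']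
  simp only [sub_mul, smul_mul_assoc, smul_sub, smul_smul, mul_assoc]
  module

/-- `co12` as a Lie subalgebra. -/
def co12L : LieSubalgebra ℝ (Matrix (Fin 3) (Fin 3) ℝ) where
  carrier := co12
  zero_mem' := ⟨0, by simp⟩
  add_mem' := by
    rintro A B ⟨α, hA⟩ ⟨β, hB⟩
    refine ⟨α + β, ?_⟩
    rw [transpose_add, add_mul, mul_add, add_smul, ← hA, ← hB]
    abel
  smul_mem' := by
    rintro c A ⟨α, hA⟩
    refine ⟨c * α, ?_⟩
    rw [transpose_smul, smul_mul_assoc, mul_smul_comm, ← smul_add, hA, smul_smul]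
  lie_mem' := by
    rintro A B ⟨α, hA⟩ ⟨β, hB⟩
    refine ⟨0, ?_⟩
    have hA' : Aᵀ * Jmat = α • Jmat - Jmat * A := eq_sub_of_add_eq hA
    have hB' : Bᵀ * Jmat = β • Jmat - Jmat * B := eq_sub_of_add_eq hB
    rw [Ring.lie_def, transpose_sub, transpose_mul, transpose_mul, sub_mul, mul_sub,
      mul_assoc, mul_assoc, key_e1 hA' hB', key_e1 hB' hA']
    module

/-- Entry relations for a member of `co12`. -/
lemma entries {X : Matrix (Fin 3) (Fin 3) ℝ} {α : ℝ}
    (h : Xᵀ * Jmat + Jmat * X = α • Jmat) :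
    X 2 0 = 0 ∧ X 0 2 = 0 ∧ X 1 1 = α/2 ∧ X 2 1 = - X 1 0 ∧ X 1 2 = - X 0 1 ∧
      X 2 2 = α - X 0 0 := by
  have e : ∀ i j, (Xᵀ * Jmat + Jmat * X) i j = (α • Jmat) i j := fun i j => by rw [h]
  have e00 := e 0 0; have e11 := e 1 1; have e22 := e 2 2
  have e01 := e 0 1; have e02 := e 0 2; have e12 := e 1 2
  simp [Jmat, Matrix.mul_apply, Fin.sum_univ_three, Matrix.transpose_apply,
    Matrix.vecMul, Matrix.vecHead, Matrix.vecTail, dotProduct,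
    Function.comp] at e00 e11 e22 e01 e02 e12
  refine ⟨by linarith, by linarith, by linarith, by linarith, by linarith, by linarith⟩

/-- Vanishing 2×2 minors imply proportionality. -/
lemma prop3 {p q r P Q R : ℝ} (m1 : q*R = r*Q) (m2 : p*Q = q*P) (m3 : r*P = p*R) :
    (P = 0 ∧ Q = 0 ∧ R = 0) ∨ ∃ l, p = l*P ∧ q = l*Q ∧ r = l*R := by
  by_cases hP : P = 0
  · by_cases hQ : Q = 0
    · by_cases hR : R = 0
      · exact Or.inl ⟨hP, hQ, hR⟩
      · refine Or.inr ⟨r/R, ?_, ?_, ?_⟩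
        · have h0 : p * R = 0 := by rw [hP] at m3; linarith
          rcases mul_eq_zero.1 h0 with h|h
          · rw [h, hP, mul_zero]
          · exact absurd h hR
        · have h0 : q * R = 0 := by rw [hQ] at m1; linarith
          rcases mul_eq_zero.1 h0 with h|h
          · rw [h, hQ, mul_zero]
          · exact absurd h hR
        · field_simp
    · refine Or.inr ⟨q/Q, ?_, ?_, ?_⟩
      · have h0 : p * Q = 0 := by rw [hP] at m2; linarith
        rcases mul_eq_zero.1 h0 with h|h
        · rw [h, hP, mul_zero]
        · exact absurd h hQ
      · field_simp
      · field_simp; linarith [m1]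
  · refine Or.inr ⟨p/P, ?_, ?_, ?_⟩
    · field_simp
    · field_simp; linarith [m2]
    · field_simp; linarith [m3]

set_option maxHeartbeats 1000000 in
/-- If the trace-free part of `X` is `l` times that of `Y`, then `X - l•Y` is scalar. -/
lemma scalar_form {X Y : Matrix (Fin 3) (Fin 3) ℝ} {α β l : ℝ}
    (hX20 : X 2 0 = 0) (hX02 : X 0 2 = 0) (hX11 : X 1 1 = α/2)
    (hX21 : X 2 1 = - X 1 0) (hX12 : X 1 2 = - X 0 1) (hX22 : X 2 2 = α - X 0 0)
    (hY20 : Y 2 0 = 0) (hY02 : Y 0 2 = 0) (hY11 : Y 1 1 = β/2)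
    (hY21 : Y 2 1 = - Y 1 0) (hY12 : Y 1 2 = - Y 0 1) (hY22 : Y 2 2 = β - Y 0 0)
    (hp : X 0 0 - α/2 = l * (Y 0 0 - β/2)) (hq : X 0 1 = l * Y 0 1)
    (hr : X 1 0 = l * Y 1 0) :
    X - l • Y = ((α - l*β)/2) • (1 : Matrix (Fin 3) (Fin 3) ℝ) := by
  ext i j
  simp only [Matrix.sub_apply, Matrix.smul_apply, Matrix.one_apply, smul_eq_mul]
  fin_cases i <;> fin_cases j <;> simp <;>
    first
      | linear_combination hp
      | linear_combination hq
      | linear_combination hr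
      | linear_combination hX02 - l * hY02
      | linear_combination hX20 - l * hY20
      | linear_combination hX11 - l * hY11
      | linear_combination hX12 - l * hY12 - hq
      | linear_combination hX21 - l * hY21 - hr
      | linear_combination hX22 - l * hY22 - hp

theorem stmt8 :
    -- `𝔠𝔬(1,2)` is a Lie subalgebra of the 3×3 matrices with commutator bracket
    (∃ L : LieSubalgebra ℝ (Matrix (Fin 3) (Fin 3) ℝ),
      (L : Set (Matrix (Fin 3) (Fin 3) ℝ)) = co12) ∧
    -- every 2-dimensional abelian Lie subalgebra of `𝔠𝔬(1,2)` contains `I`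
    (∀ L : LieSubalgebra ℝ (Matrix (Fin 3) (Fin 3) ℝ),
      (L : Set (Matrix (Fin 3) (Fin 3) ℝ)) ⊆ co12 →
      Module.finrank ℝ L = 2 →
      (∀ X ∈ L, ∀ Y ∈ L, X * Y = Y * X) →
      (1 : Matrix (Fin 3) (Fin 3) ℝ) ∈ L) := by
  constructor
  · exact ⟨co12L, rfl⟩
  intro L hsub hrank hab
  by_contra hI
  haveI : FiniteDimensional ℝ L := inferInstance
  let b : Module.Basis (Fin 2) ℝ L := Module.finBasisOfFinrankEq ℝ L hrank
  set X : Matrix (Fin 3) (Fin 3) ℝ := (b 0 : Matrix (Fin 3) (Fin 3) ℝ) with hXdef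
  set Y : Matrix (Fin 3) (Fin 3) ℝ := (b 1 : Matrix (Fin 3) (Fin 3) ℝ) with hYdef
  have hXL : X ∈ L := (b 0).2
  have hYL : Y ∈ L := (b 1).2
  obtain ⟨α, hX⟩ := hsub hXL
  obtain ⟨β, hY⟩ := hsub hYL
  obtain ⟨hX20, hX02, hX11, hX21, hX12, hX22⟩ := entries hX
  obtain ⟨hY20, hY02, hY11, hY21, hY12, hY22⟩ := entries hY
  have hcomm : X * Y = Y * X := hab X hXL Y hYL
  have e : ∀ i j, (X * Y) i j = (Y * X) i j := fun i j => by rw [hcomm]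
  have e00 := e 0 0; have e01 := e 0 1; have e10 := e 1 0
  simp only [Matrix.mul_apply, Fin.sum_univ_three] at e00 e01 e10
  have m1 : X 0 1 * Y 1 0 = X 1 0 * Y 0 1 := by
    linear_combination e00 - Y 2 0 * hX02 + X 2 0 * hY02
  have m2 : (X 0 0 - α/2) * Y 0 1 = X 0 1 * (Y 0 0 - β/2) := by
    linear_combination e01 - Y 2 1 * hX02 + X 2 1 * hY02 - X 0 1 * hY11 + Y 0 1 * hX11
  have m3 : X 1 0 * (Y 0 0 - β/2) = (X 0 0 - α/2) * Y 1 0 := by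
    linear_combination e10 - X 1 2 * hY20 + Y 1 2 * hX20 - Y 1 0 * hX11 + X 1 0 * hY11
  -- helper: a nonzero scalar matrix in L gives 1 ∈ L
  have one_mem : ∀ (c : ℝ) (Z : L), c ≠ 0 → (Z : Matrix (Fin 3) (Fin 3) ℝ) = c • 1 → False := by
    intro c Z hc hZ
    apply hI
    have h1 : c⁻¹ • (Z : Matrix (Fin 3) (Fin 3) ℝ) ∈ L := L.smul_mem c⁻¹ Z.2
    rwa [hZ, smul_smul, inv_mul_cancel₀ hc, one_smul] at h1
  rcases prop3 m1 m2 m3 with ⟨hP, hQ, hR⟩ | ⟨l, hp, hq, hr⟩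
  · -- Y is a scalar matrix
    have hYmat : Y - (0:ℝ) • (0 : Matrix (Fin 3) (Fin 3) ℝ) =
        ((β - 0*0)/2) • (1 : Matrix (Fin 3) (Fin 3) ℝ) := by
      refine scalar_form hY20 hY02 hY11 hY21 hY12 hY22 ?_ ?_ ?_ ?_ ?_ ?_ ?_ ?_ ?_ <;>
        simp <;> linarith
    rw [zero_smul, sub_zero] at hYmat
    simp only [mul_zero, sub_zero] at hYmat
    by_cases hβ : β = 0
    · refine b.ne_zero 1 (Subtype.ext ?_)
      rw [← hYdef, hYmat, hβ]; simp
    · exact one_mem (β/2) (b 1) (div_ne_zero hβ two_ne_zero) hYmat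
  · -- X - l • Y is a scalar matrix
    have key : X - l • Y = ((α - l*β)/2) • (1 : Matrix (Fin 3) (Fin 3) ℝ) :=
      scalar_form hX20 hX02 hX11 hX21 hX12 hX22 hY20 hY02 hY11 hY21 hY12 hY22
        (by linarith) (by linarith) (by linarith)
    set c : ℝ := (α - l*β)/2 with hc
    by_cases hc0 : c = 0
    · have hXY : X = l • Y := by
        have h := key; rw [hc0, zero_smul] at h; exact sub_eq_zero.mp h
      have hb : (b 0) = l • (b 1) := Subtype.ext (by
        show X = ((l • b 1 : L) : Matrix (Fin 3) (Fin 3) ℝ)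
        rw [hXY]; rfl)
      have h2 := congrArg (fun z : L => b.repr z 0) hb
      simp [Module.Basis.repr_self, Finsupp.single_apply] at h2
    · exact one_mem c ⟨X - l • Y, L.sub_mem hXL (L.smul_mem l hYL)⟩ hc0 key
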